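/- Assume the CRK setup and all hypotheses of Theorem 3.2 (skew-symmetric M, K, L, skew-symmetric differentiation matrices D_x of size N×N and D_y of size M̃×M̃, S continuously differentiable in its first argument, Δt > 0, continuous δ_t z_{jl} : [0,1] → ℝ^d, z_{jl}(τ) = z_{jl}⁰ + Δt ∫₀¹ A_{τ,σ} δ_t z_{jl}(σ) dσ, z_{jl}¹ = z_{jl}⁰ + Δt ∫₀¹ δ_t z_{jl}(σ) dσ, δ_x z_{jl}(τ) = Σ_k (D_x)_{jk} z_{kl}(τ), δ_y z_{jl}(τ) = Σ_m (D_y)_{lm} z_{jm}(τ), and M δ_t z_{jl}(τ) + K δ_x z_{jl}(τ) + L δ_y z_{jl}(τ) = ∇_z S(z_{jl}(τ), x_j, y_l) for all τ, j, l). Then the discrete global energy is exactly conserved: Σ_{j=0}^{N−1} Σ_{l=0}^{M̃−1} E_{jl}¹ = Σ_{j=0}^{N−1} Σ_{l=0}^{M̃−1} E_{jl}⁰, where E_{jl}^α = S(z_{jl}^α, x_j, y_l) − (1/2) (z_{jl}^α)ᵀ K δ_x z_{jl}^α − (1/2) (z_{jl}^α)ᵀ L δ_y z_{jl}^α for α ∈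 {0,1}. -/

import Mathlib

open scoped Matrix

noncomputable def dotCLM {d : ℕ} (g : Fin d → ℝ) : (Fin d → ℝ) →L[ℝ] ℝ :=
  ∑ i : Fin d, g i • (ContinuousLinearMap.proj i : (Fin d → ℝ) →L[ℝ] ℝ)

noncomputable def lag {s : ℕ} (c : Fin s → ℝ) (i : Fin s) (τ : ℝ) : ℝ :=
  (Lagrange.basis (Finset.univ : Finset (Fin s)) c i).eval τ

noncomputable def bw {s : ℕ} (c : Fin s → ℝ) (i : Fin s) : ℝ :=
  ∫ τ in (0:ℝ)..1, lag c i τ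

noncomputable def Acrk {s : ℕ} (c : Fin s → ℝ) (τ σ : ℝ) : ℝ :=
  ∑ i : Fin s, (1 / bw c i) * (∫ α in (0:ℝ)..τ, lag c i α) * lag c i σ

noncomputable def wavg {s : ℕ} (c : Fin s → ℝ) (i : Fin s) {G : Type*}
    [NormedAddCommGroup G] [NormedSpace ℝ G] (f : ℝ → G) : G :=
  (1 / bw c i) • ∫ τ in (0:ℝ)..1, lag c i τ • f τ

/-! ### Auxiliary lemmas -/

lemma dotCLM_apply' {d : ℕ} (g v : Fin d → ℝ) : dotCLM g v = g ⬝ᵥ v := by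
  simp [dotCLM, dotProduct]

lemma lag_cont {s : ℕ} (c : Fin s → ℝ) (i : Fin s) : Continuous (lag c i) := by
  exact (Lagrange.basis (Finset.univ : Finset (Fin s)) c i).continuous

lemma sum_dotProduct' {d n : ℕ} (f : Fin n → Fin d → ℝ) (w : Fin d → ℝ) :
    (∑ i, f i) ⬝ᵥ w = ∑ i, f i ⬝ᵥ w := by
  simp only [dotProduct, Finset.sum_apply, Finset.sum_mul]
  exact Finset.sum_comm

lemma dot_mulVec_sum {d n : ℕ} (K : Matrix (Fin d) (Fin d) ℝ) (a : Fin d → ℝ)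
    (v : Fin n → Fin d → ℝ) :
    a ⬝ᵥ K.mulVec (∑ k, v k) = ∑ k, a ⬝ᵥ K.mulVec (v k) := by
  have h1 : K.mulVec (∑ k, v k) = ∑ k, K.mulVec (v k) := by
    ext p
    simp only [Matrix.mulVec, dotProduct, Finset.sum_apply, Finset.mul_sum]
    exact Finset.sum_comm
  rw [h1, dotProduct_comm, sum_dotProduct']
  exact Finset.sum_congr rfl fun k _ => dotProduct_comm _ _

lemma skew_dot {d : ℕ} {M : Matrix (Fin d) (Fin d) ℝ} (hM : Mᵀ = -M) (a b : Fin d → ℝ) :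
    a ⬝ᵥ M.mulVec b = -(b ⬝ᵥ M.mulVec a) := by
  rw [Matrix.dotProduct_mulVec]
  calc a ᵥ* M ⬝ᵥ b = a ᵥ* (Mᵀ)ᵀ ⬝ᵥ b := by rw [Matrix.transpose_transpose]
    _ = (Mᵀ *ᵥ a) ⬝ᵥ b := by rw [Matrix.vecMul_transpose]
    _ = ((-M) *ᵥ a) ⬝ᵥ b := by rw [hM]
    _ = -((M *ᵥ a) ⬝ᵥ b) := by rw [Matrix.neg_mulVec, neg_dotProduct]
    _ = -(b ⬝ᵥ M *ᵥ a) := by rw [dotProduct_comm]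

lemma skew_dot_self {d : ℕ} {M : Matrix (Fin d) (Fin d) ℝ} (hM : Mᵀ = -M) (a : Fin d → ℝ) :
    a ⬝ᵥ M.mulVec a = 0 := by
  have := skew_dot hM a a
  linarith

lemma hgMw {d : ℕ} (M : Matrix (Fin d) (Fin d) ℝ) (a w : Fin d → ℝ) :
    a ⬝ᵥ M.mulVec w = dotCLM (Mᵀ.mulVec a) w := by
  rw [dotCLM_apply', Matrix.dotProduct_mulVec]
  congr 1
  rw [← Matrix.vecMul_transpose, Matrix.transpose_transpose]

lemma swap_sum {d n m : ℕ} {K : Matrix (Fin d) (Fin d) ℝ} (hK : Kᵀ = -K)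
    {D : Matrix (Fin n) (Fin n) ℝ} (hD : Dᵀ = -D)
    (a b : Fin n → Fin m → Fin d → ℝ) :
    (∑ j, ∑ l, a j l ⬝ᵥ K.mulVec (∑ k, D j k • b k l))
      = ∑ j, ∑ l, b j l ⬝ᵥ K.mulVec (∑ k, D j k • a k l) := by
  have expand : ∀ (a b : Fin n → Fin m → Fin d → ℝ) (j : Fin n) (l : Fin m),
      a j l ⬝ᵥ K.mulVec (∑ k, D j k • b k l) = ∑ k, D j k * (a j l ⬝ᵥ K.mulVec (b k l)) := by
    intro a b j l
    rw [dot_mulVec_sum]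
    exact Finset.sum_congr rfl fun k _ => by
      rw [Matrix.mulVec_smul, dotProduct_smul, smul_eq_mul]
  simp only [expand]
  calc (∑ j, ∑ l, ∑ k, D j k * (a j l ⬝ᵥ K.mulVec (b k l)))
      = ∑ j, ∑ k, ∑ l, D j k * (a j l ⬝ᵥ K.mulVec (b k l)) :=
        Finset.sum_congr rfl fun j _ => Finset.sum_comm
    _ = ∑ k, ∑ j, ∑ l, D j k * (a j l ⬝ᵥ K.mulVec (b k l)) := Finset.sum_comm
    _ = ∑ j, ∑ k, ∑ l, D j k * (b j l ⬝ᵥ K.mulVec (a k l)) := by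
        refine Finset.sum_congr rfl fun p _ => Finset.sum_congr rfl fun q _ =>
          Finset.sum_congr rfl fun l _ => ?_
        have h1 : D q p = -D p q := by
          have := congrFun (congrFun hD p) q
          simpa [Matrix.transpose_apply] using this
        rw [h1, skew_dot hK]
        ring
    _ = ∑ j, ∑ l, ∑ k, D j k * (b j l ⬝ᵥ K.mulVec (a k l)) :=
        Finset.sum_congr rfl fun j _ => Finset.sum_comm

lemma hasDerivAt_dot_mulVec {d : ℕ} (K : Matrix (Fin d) (Fin d) ℝ)
    {f g : ℝ → Fin d → ℝ} {f' g' : Fin d → ℝ} {τ : ℝ}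
    (hf : HasDerivAt f f' τ) (hg : HasDerivAt g g' τ) :
    HasDerivAt (fun t => f t ⬝ᵥ K.mulVec (g t))
      (f' ⬝ᵥ K.mulVec (g τ) + f τ ⬝ᵥ K.mulVec g') τ := by
  have hfc := hasDerivAt_pi.mp hf
  have hgc := hasDerivAt_pi.mp hg
  have h : HasDerivAt (fun t => ∑ p, f t p * ∑ q, K p q * g t q)
      (∑ p, (f' p * (∑ q, K p q * g τ q) + f τ p * ∑ q, K p q * g' q)) τ :=
    HasDerivAt.fun_sum fun p _ =>
      (hfc p).mul (HasDerivAt.fun_sum fun q _ => (hgc q).const_mul (K p q))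
  simpa [dotProduct, Matrix.mulVec, Finset.sum_add_distrib] using h

set_option maxHeartbeats 2000000 in
theorem stmt9 {s d N Mt : ℕ} (hs : 1 ≤ s) (c : Fin s → ℝ) (hc : Function.Injective c)
    (hb : ∀ i, bw c i ≠ 0)
    (M K L : Matrix (Fin d) (Fin d) ℝ) (hM : Mᵀ = -M) (hK : Kᵀ = -K) (hL : Lᵀ = -L)
    (S : (Fin d → ℝ) → ℝ → ℝ → ℝ) (gradS : (Fin d → ℝ) → ℝ → ℝ → (Fin d → ℝ))
    (hS : ∀ (x y : ℝ) (w : Fin d → ℝ), HasFDerivAt (fun w' => S w' x y) (dotCLM (gradS w x y)) w)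
    (hSc : ∀ x y : ℝ, Continuous fun w => gradS w x y)
    (Dx : Matrix (Fin N) (Fin N) ℝ) (hDx : Dxᵀ = -Dx)
    (Dy : Matrix (Fin Mt) (Fin Mt) ℝ) (hDy : Dyᵀ = -Dy)
    (x : Fin N → ℝ) (y : Fin Mt → ℝ) (Δt : ℝ) (hΔt : 0 < Δt)
    (δtz : Fin N → Fin Mt → ℝ → (Fin d → ℝ))
    (hδtc : ∀ j l, ContinuousOn (δtz j l) (Set.Icc 0 1))
    (z0 : Fin N → Fin Mt → Fin d → ℝ) (z : Fin N → Fin Mt → ℝ → (Fin d → ℝ))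
    (hz : ∀ j l τ, z j l τ = z0 j l + Δt • ∫ σ in (0:ℝ)..1, Acrk c τ σ • δtz j l σ)
    (z1 : Fin N → Fin Mt → Fin d → ℝ)
    (hz1 : ∀ j l, z1 j l = z0 j l + Δt • ∫ σ in (0:ℝ)..1, δtz j l σ)
    (δxz δyz : Fin N → Fin Mt → ℝ → (Fin d → ℝ))
    (hδx : ∀ j l τ, δxz j l τ = ∑ k, Dx j k • z k l τ)
    (hδy : ∀ j l τ, δyz j l τ = ∑ m, Dy l m • z j m τ)
    (hcoll : ∀ j l, ∀ τ ∈ Set.Icc (0:ℝ) 1,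
      M.mulVec (δtz j l τ) + K.mulVec (δxz j l τ) + L.mulVec (δyz j l τ)
        = gradS (z j l τ) (x j) (y l))
    (E0 E1 : Fin N → Fin Mt → ℝ)
    (hE0 : ∀ j l, E0 j l = S (z j l 0) (x j) (y l)
        - (1/2) * dotProduct (z j l 0) (K.mulVec (∑ k, Dx j k • z k l 0))
        - (1/2) * dotProduct (z j l 0) (L.mulVec (∑ m, Dy l m • z j m 0)))
    (hE1 : ∀ j l, E1 j l = S (z1 j l) (x j) (y l)
        - (1/2) * dotProduct (z1 j l) (K.mulVec (∑ k, Dx j k • z1 k l))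
        - (1/2) * dotProduct (z1 j l) (L.mulVec (∑ m, Dy l m • z1 j m))) :
    ∑ j, ∑ l, E1 j l = ∑ j, ∑ l, E0 j l := by
  haveI : Nonempty (Fin s) := ⟨⟨0, hs⟩⟩
  have I01 : Set.uIcc (0:ℝ) 1 = Set.Icc 0 1 := Set.uIcc_of_le zero_le_one
  obtain ⟨P, hPdef⟩ : ∃ P : Fin s → ℝ → ℝ, P = fun i τ => ∫ α in (0:ℝ)..τ, lag c i α := ⟨_, rfl⟩
  obtain ⟨g, hgdef⟩ : ∃ g : Fin N → Fin Mt → Fin s → (Fin d → ℝ),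
    g = fun j l i => wavg c i (δtz j l) := ⟨_, rfl⟩
  obtain ⟨u, hudef⟩ : ∃ u : Fin N → Fin Mt → ℝ → (Fin d → ℝ),
    u = fun j l τ => ∑ i, lag c i τ • g j l i := ⟨_, rfl⟩
  have hprodInt : ∀ j l i, IntervalIntegrable (fun σ => lag c i σ • δtz j l σ)
      MeasureTheory.volume 0 1 := by
    intro j l i
    apply ContinuousOn.intervalIntegrable
    rw [I01]
    exact (lag_cont c i).continuousOn.smul (hδtc j l)
  -- the polynomial representation of z
  have hzeq : ∀ j l τ, z j l τ = z0 j l + Δt • ∑ i, P i τ • g j l i := by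
    intro j l τ
    have hintg : ∀ σ : ℝ, Acrk c τ σ • δtz j l σ
        = ∑ i, ((1 / bw c i) * P i τ) • (lag c i σ • δtz j l σ) := by
      intro σ
      simp only [hPdef, Acrk, Finset.sum_smul, smul_smul, mul_assoc]
    have hcalc : (∫ σ in (0:ℝ)..1, Acrk c τ σ • δtz j l σ) = ∑ i, P i τ • g j l i := by
      calc (∫ σ in (0:ℝ)..1, Acrk c τ σ • δtz j l σ)
          = ∫ σ in (0:ℝ)..1, ∑ i, ((1 / bw c i) * P i τ) • (lag c i σ • δtz j l σ) := by
            simp only [hintg]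
        _ = ∑ i, ∫ σ in (0:ℝ)..1, ((1 / bw c i) * P i τ) • (lag c i σ • δtz j l σ) := by
            refine intervalIntegral.integral_finset_sum fun i _ => ?_
            have h := (hprodInt j l i).smul ((1 / bw c i) * P i τ)
            exact h
        _ = ∑ i, P i τ • g j l i := by
            refine Finset.sum_congr rfl fun i _ => ?_
            rw [intervalIntegral.integral_smul]
            simp only [hgdef, wavg]
            rw [smul_smul, mul_comm]
    rw [hz j l τ, hcalc]
  -- sum of Lagrange basis polynomials is 1
  have hsum1 : ∀ σ : ℝ, (∑ i, lag c i σ) = 1 := by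
    intro σ
    have h := Lagrange.sum_basis (v := c) (hc.injOn) (Finset.univ_nonempty
      (α := Fin s))
    have h2 := congrArg (Polynomial.eval σ) h
    simpa [lag, Polynomial.eval_finset_sum] using h2
  -- z at time 1 equals z1
  have hz1eq : ∀ j l, z j l 1 = z1 j l := by
    intro j l
    have hP1 : ∀ i, P i 1 = bw c i := by
      intro i
      simp only [hPdef]
      rfl
    have hkey : (∑ i, P i 1 • g j l i) = ∫ σ in (0:ℝ)..1, δtz j l σ := by
      calc (∑ i, P i 1 • g j l i)
          = ∑ i, ∫ σ in (0:ℝ)..1, lag c i σ • δtz j l σ := by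
            refine Finset.sum_congr rfl fun i _ => ?_
            rw [hP1 i]
            simp only [hgdef, wavg, smul_smul]
            rw [mul_one_div, div_self (hb i), one_smul]
        _ = ∫ σ in (0:ℝ)..1, ∑ i, lag c i σ • δtz j l σ :=
            (intervalIntegral.integral_finset_sum fun i _ => hprodInt j l i).symm
        _ = ∫ σ in (0:ℝ)..1, δtz j l σ := by
            refine intervalIntegral.integral_congr fun σ _ => ?_
            rw [← Finset.sum_smul, hsum1, one_smul]
    rw [hzeq j l 1, hz1 j l, hkey]
  -- derivative of z
  have hzderiv : ∀ j l τ, HasDerivAt (z j l) (Δt • u j l τ) τ := by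
    intro j l τ
    have hfun : z j l = fun t => z0 j l + Δt • ∑ i, P i t • g j l i :=
      funext fun t => hzeq j l t
    rw [hfun]
    simp only [hudef]
    have hPd : ∀ i, HasDerivAt (fun t => P i t) (lag c i τ) τ := by
      intro i
      simp only [hPdef]
      exact intervalIntegral.integral_hasDerivAt_right
        ((lag_cont c i).intervalIntegrable 0 τ)
        ((lag_cont c i).stronglyMeasurableAtFilter _ _) (lag_cont c i).continuousAt
    exact ((HasDerivAt.fun_sum fun i _ => (hPd i).smul_const (g j l i)).const_smul Δt).const_add
      (z0 j l)
  -- continuity helpers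
  have hcontdot : ∀ j l (h : Fin d → ℝ),
      ContinuousOn (fun τ => h ⬝ᵥ M.mulVec (δtz j l τ)) (Set.Icc 0 1) := by
    intro j l h
    have h2 := ((dotCLM (Mᵀ.mulVec h)).continuous).comp_continuousOn (hδtc j l)
    simpa only [Function.comp_def, hgMw M h] using h2
  have huexp : ∀ j l τ, u j l τ ⬝ᵥ M.mulVec (δtz j l τ)
      = ∑ i, lag c i τ * (g j l i ⬝ᵥ M.mulVec (δtz j l τ)) := by
    intro j l τ
    simp only [hudef]
    rw [sum_dotProduct']
    exact Finset.sum_congr rfl fun i _ => by rw [smul_dotProduct, smul_eq_mul]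
  have hcont3 : ∀ j l i, ContinuousOn
      (fun τ => lag c i τ * (g j l i ⬝ᵥ M.mulVec (δtz j l τ))) (Set.Icc 0 1) :=
    fun j l i => (lag_cont c i).continuousOn.mul (hcontdot j l (g j l i))
  have hcontJL : ∀ j l, ContinuousOn (fun τ => u j l τ ⬝ᵥ M.mulVec (δtz j l τ))
      (Set.Icc 0 1) := by
    intro j l
    have heq : (fun τ => u j l τ ⬝ᵥ M.mulVec (δtz j l τ))
        = fun τ => ∑ i, lag c i τ * (g j l i ⬝ᵥ M.mulVec (δtz j l τ)) :=
      funext fun τ => huexp j l τ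
    rw [heq]
    exact continuousOn_finset_sum _ fun i _ => hcont3 j l i
  -- the energy function
  obtain ⟨E, hEdef⟩ : ∃ E : ℝ → ℝ, E = fun t => ∑ j, ∑ l, (S (z j l t) (x j) (y l)
      - (1/2) * dotProduct (z j l t) (K.mulVec (∑ k, Dx j k • z k l t))
      - (1/2) * dotProduct (z j l t) (L.mulVec (∑ m, Dy l m • z j m t))) := ⟨_, rfl⟩
  have hE0' : E 0 = ∑ j, ∑ l, E0 j l := by
    simp only [hEdef]
    exact Finset.sum_congr rfl fun j _ => Finset.sum_congr rfl fun l _ => (hE0 j l).symm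
  have hE1' : E 1 = ∑ j, ∑ l, E1 j l := by
    simp only [hEdef]
    refine Finset.sum_congr rfl fun j _ => Finset.sum_congr rfl fun l _ => ?_
    rw [hE1 j l]
    simp only [hz1eq]
  -- derivative of the energy
  have hEderiv : ∀ τ ∈ Set.Icc (0:ℝ) 1,
      HasDerivAt E (Δt * ∑ j, ∑ l, (u j l τ ⬝ᵥ M.mulVec (δtz j l τ))) τ := by
    intro τ hτ
    have hzd : ∀ j l, HasDerivAt (z j l) (Δt • u j l τ) τ := fun j l => hzderiv j l τ
    have hcoll' : ∀ j l, gradS (z j l τ) (x j) (y l)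
        = M.mulVec (δtz j l τ) + K.mulVec (∑ k, Dx j k • z k l τ)
          + L.mulVec (∑ m, Dy l m • z j m τ) := by
      intro j l
      have h := hcoll j l τ hτ
      rw [hδx, hδy] at h
      exact h.symm
    have hterm : ∀ j l, HasDerivAt (fun t => S (z j l t) (x j) (y l)
          - (1/2) * dotProduct (z j l t) (K.mulVec (∑ k, Dx j k • z k l t))
          - (1/2) * dotProduct (z j l t) (L.mulVec (∑ m, Dy l m • z j m t)))
        (gradS (z j l τ) (x j) (y l) ⬝ᵥ (Δt • u j l τ)
          - (1/2) * ((Δt • u j l τ) ⬝ᵥ K.mulVec (∑ k, Dx j k • z k l τ)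
              + z j l τ ⬝ᵥ K.mulVec (∑ k, Dx j k • (Δt • u k l τ)))
          - (1/2) * ((Δt • u j l τ) ⬝ᵥ L.mulVec (∑ m, Dy l m • z j m τ)
              + z j l τ ⬝ᵥ L.mulVec (∑ m, Dy l m • (Δt • u j m τ)))) τ := by
      intro j l
      have h1 : HasDerivAt (fun t => S (z j l t) (x j) (y l))
          (gradS (z j l τ) (x j) (y l) ⬝ᵥ (Δt • u j l τ)) τ := by
        have := (hS (x j) (y l) (z j l τ)).comp_hasDerivAt τ (hzd j l)
        simpa [Function.comp_def, dotCLM_apply'] using this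
      have h2 : HasDerivAt (fun t => z j l t ⬝ᵥ K.mulVec (∑ k, Dx j k • z k l t))
          ((Δt • u j l τ) ⬝ᵥ K.mulVec (∑ k, Dx j k • z k l τ)
            + z j l τ ⬝ᵥ K.mulVec (∑ k, Dx j k • (Δt • u k l τ))) τ :=
        hasDerivAt_dot_mulVec K (hzd j l)
          (HasDerivAt.fun_sum fun k _ => (hzd k l).const_smul (Dx j k))
      have h3 : HasDerivAt (fun t => z j l t ⬝ᵥ L.mulVec (∑ m, Dy l m • z j m t))
          ((Δt • u j l τ) ⬝ᵥ L.mulVec (∑ m, Dy l m • z j m τ)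
            + z j l τ ⬝ᵥ L.mulVec (∑ m, Dy l m • (Δt • u j m τ))) τ :=
        hasDerivAt_dot_mulVec L (hzd j l)
          (HasDerivAt.fun_sum fun m _ => (hzd j m).const_smul (Dy l m))
      exact (h1.sub (h2.const_mul (1/2))).sub (h3.const_mul (1/2))
    have hsum : HasDerivAt E (∑ j, ∑ l,
        (gradS (z j l τ) (x j) (y l) ⬝ᵥ (Δt • u j l τ)
          - (1/2) * ((Δt • u j l τ) ⬝ᵥ K.mulVec (∑ k, Dx j k • z k l τ)
              + z j l τ ⬝ᵥ K.mulVec (∑ k, Dx j k • (Δt • u k l τ)))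
          - (1/2) * ((Δt • u j l τ) ⬝ᵥ L.mulVec (∑ m, Dy l m • z j m τ)
              + z j l τ ⬝ᵥ L.mulVec (∑ m, Dy l m • (Δt • u j m τ))))) τ := by
      rw [hEdef]
      exact HasDerivAt.fun_sum fun j _ => HasDerivAt.fun_sum fun l _ => hterm j l
    have hDval : ∀ (j : Fin N) (l : Fin Mt),
        (gradS (z j l τ) (x j) (y l) ⬝ᵥ (Δt • u j l τ)
          - (1/2) * ((Δt • u j l τ) ⬝ᵥ K.mulVec (∑ k, Dx j k • z k l τ)
              + z j l τ ⬝ᵥ K.mulVec (∑ k, Dx j k • (Δt • u k l τ)))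
          - (1/2) * ((Δt • u j l τ) ⬝ᵥ L.mulVec (∑ m, Dy l m • z j m τ)
              + z j l τ ⬝ᵥ L.mulVec (∑ m, Dy l m • (Δt • u j m τ))))
        = ((Δt • u j l τ) ⬝ᵥ M.mulVec (δtz j l τ))
          + (1/2) * ((Δt • u j l τ) ⬝ᵥ K.mulVec (∑ k, Dx j k • z k l τ))
          - (1/2) * (z j l τ ⬝ᵥ K.mulVec (∑ k, Dx j k • (Δt • u k l τ)))
          + (1/2) * ((Δt • u j l τ) ⬝ᵥ L.mulVec (∑ m, Dy l m • z j m τ))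
          - (1/2) * (z j l τ ⬝ᵥ L.mulVec (∑ m, Dy l m • (Δt • u j m τ))) := by
      intro j l
      rw [hcoll' j l, add_dotProduct, add_dotProduct,
        dotProduct_comm (M.mulVec (δtz j l τ)),
        dotProduct_comm (K.mulVec (∑ k, Dx j k • z k l τ)),
        dotProduct_comm (L.mulVec (∑ m, Dy l m • z j m τ))]
      ring
    have hswapK' : (∑ j, ∑ l, ((Δt • u j l τ) ⬝ᵥ K.mulVec (∑ k, Dx j k • z k l τ)))
        = ∑ j, ∑ l, (z j l τ ⬝ᵥ K.mulVec (∑ k, Dx j k • (Δt • u k l τ))) :=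
      swap_sum hK hDx _ _
    have hswapL0 : (∑ l : Fin Mt, ∑ j : Fin N,
          ((Δt • u j l τ) ⬝ᵥ L.mulVec (∑ m, Dy l m • z j m τ)))
        = ∑ l : Fin Mt, ∑ j : Fin N,
          (z j l τ ⬝ᵥ L.mulVec (∑ m, Dy l m • (Δt • u j m τ))) :=
      swap_sum hL hDy _ _
    have hswapL' : (∑ j, ∑ l, ((Δt • u j l τ) ⬝ᵥ L.mulVec (∑ m, Dy l m • z j m τ)))
        = ∑ j, ∑ l, (z j l τ ⬝ᵥ L.mulVec (∑ m, Dy l m • (Δt • u j m τ))) :=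
      calc (∑ j, ∑ l, ((Δt • u j l τ) ⬝ᵥ L.mulVec (∑ m, Dy l m • z j m τ)))
          = ∑ l : Fin Mt, ∑ j : Fin N,
              ((Δt • u j l τ) ⬝ᵥ L.mulVec (∑ m, Dy l m • z j m τ)) := Finset.sum_comm
        _ = ∑ l : Fin Mt, ∑ j : Fin N,
              (z j l τ ⬝ᵥ L.mulVec (∑ m, Dy l m • (Δt • u j m τ))) := hswapL0
        _ = ∑ j, ∑ l, (z j l τ ⬝ᵥ L.mulVec (∑ m, Dy l m • (Δt • u j m τ))) :=
            Finset.sum_comm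
    have hA : (∑ j, ∑ l, ((Δt • u j l τ) ⬝ᵥ M.mulVec (δtz j l τ)))
        = Δt * ∑ j, ∑ l, (u j l τ ⬝ᵥ M.mulVec (δtz j l τ)) := by
      simp only [smul_dotProduct, smul_eq_mul, Finset.mul_sum]
    have hval : (∑ j, ∑ l,
        (gradS (z j l τ) (x j) (y l) ⬝ᵥ (Δt • u j l τ)
          - (1/2) * ((Δt • u j l τ) ⬝ᵥ K.mulVec (∑ k, Dx j k • z k l τ)
              + z j l τ ⬝ᵥ K.mulVec (∑ k, Dx j k • (Δt • u k l τ)))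
          - (1/2) * ((Δt • u j l τ) ⬝ᵥ L.mulVec (∑ m, Dy l m • z j m τ)
              + z j l τ ⬝ᵥ L.mulVec (∑ m, Dy l m • (Δt • u j m τ)))))
        = Δt * ∑ j, ∑ l, (u j l τ ⬝ᵥ M.mulVec (δtz j l τ)) := by
      calc (∑ j, ∑ l,
          (gradS (z j l τ) (x j) (y l) ⬝ᵥ (Δt • u j l τ)
            - (1/2) * ((Δt • u j l τ) ⬝ᵥ K.mulVec (∑ k, Dx j k • z k l τ)
                + z j l τ ⬝ᵥ K.mulVec (∑ k, Dx j k • (Δt • u k l τ)))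
            - (1/2) * ((Δt • u j l τ) ⬝ᵥ L.mulVec (∑ m, Dy l m • z j m τ)
                + z j l τ ⬝ᵥ L.mulVec (∑ m, Dy l m • (Δt • u j m τ)))))
          = ∑ j, ∑ l, (((Δt • u j l τ) ⬝ᵥ M.mulVec (δtz j l τ))
            + (1/2) * ((Δt • u j l τ) ⬝ᵥ K.mulVec (∑ k, Dx j k • z k l τ))
            - (1/2) * (z j l τ ⬝ᵥ K.mulVec (∑ k, Dx j k • (Δt • u k l τ)))
            + (1/2) * ((Δt • u j l τ) ⬝ᵥ L.mulVec (∑ m, Dy l m • z j m τ))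
            - (1/2) * (z j l τ ⬝ᵥ L.mulVec (∑ m, Dy l m • (Δt • u j m τ)))) :=
            Finset.sum_congr rfl fun j _ => Finset.sum_congr rfl fun l _ => hDval j l
        _ = (∑ j, ∑ l, ((Δt • u j l τ) ⬝ᵥ M.mulVec (δtz j l τ)))
            + (1/2) * (∑ j, ∑ l, ((Δt • u j l τ) ⬝ᵥ K.mulVec (∑ k, Dx j k • z k l τ)))
            - (1/2) * (∑ j, ∑ l, (z j l τ ⬝ᵥ K.mulVec (∑ k, Dx j k • (Δt • u k l τ))))
            + (1/2) * (∑ j, ∑ l, ((Δt • u j l τ) ⬝ᵥ L.mulVec (∑ m, Dy l m • z j m τ)))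
            - (1/2) * (∑ j, ∑ l, (z j l τ ⬝ᵥ L.mulVec (∑ m, Dy l m • (Δt • u j m τ)))) := by
            simp only [Finset.sum_add_distrib, Finset.sum_sub_distrib, ← Finset.mul_sum]
        _ = ∑ j, ∑ l, ((Δt • u j l τ) ⬝ᵥ M.mulVec (δtz j l τ)) := by
            rw [hswapK', hswapL']
            ring
        _ = Δt * ∑ j, ∑ l, (u j l τ ⬝ᵥ M.mulVec (δtz j l τ)) := hA
    rw [← hval]
    exact hsum
  -- integrability of the derivative
  have hFint : IntervalIntegrable
      (fun τ => Δt * ∑ j, ∑ l, (u j l τ ⬝ᵥ M.mulVec (δtz j l τ)))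
      MeasureTheory.volume 0 1 := by
    apply ContinuousOn.intervalIntegrable
    rw [I01]
    exact continuousOn_const.mul (continuousOn_finset_sum _ fun j _ =>
      continuousOn_finset_sum _ fun l _ => hcontJL j l)
  -- fundamental theorem of calculus
  have hftc : (∫ τ in (0:ℝ)..1, Δt * ∑ j, ∑ l, (u j l τ ⬝ᵥ M.mulVec (δtz j l τ)))
      = E 1 - E 0 :=
    intervalIntegral.integral_eq_sub_of_hasDerivAt (fun t ht => hEderiv t (I01 ▸ ht)) hFint
  -- the integral vanishes
  have hint3 : ∀ j l i, IntervalIntegrable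
      (fun τ => lag c i τ * (g j l i ⬝ᵥ M.mulVec (δtz j l τ))) MeasureTheory.volume 0 1 := by
    intro j l i
    apply ContinuousOn.intervalIntegrable
    rw [I01]
    exact hcont3 j l i
  have hint1 : ∀ j l i, (∫ τ in (0:ℝ)..1, lag c i τ * (g j l i ⬝ᵥ M.mulVec (δtz j l τ)))
      = g j l i ⬝ᵥ M.mulVec (∫ σ in (0:ℝ)..1, lag c i σ • δtz j l σ) := by
    intro j l i
    calc (∫ τ in (0:ℝ)..1, lag c i τ * (g j l i ⬝ᵥ M.mulVec (δtz j l τ)))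
        = ∫ τ in (0:ℝ)..1, dotCLM (Mᵀ.mulVec (g j l i)) (lag c i τ • δtz j l τ) := by
          refine intervalIntegral.integral_congr fun τ _ => ?_
          rw [map_smul, smul_eq_mul, hgMw]
      _ = dotCLM (Mᵀ.mulVec (g j l i)) (∫ σ in (0:ℝ)..1, lag c i σ • δtz j l σ) :=
          ContinuousLinearMap.intervalIntegral_comp_comm _ (hprodInt j l i)
      _ = g j l i ⬝ᵥ M.mulVec (∫ σ in (0:ℝ)..1, lag c i σ • δtz j l σ) := (hgMw M _ _).symm
  have hFzero : (∫ τ in (0:ℝ)..1, Δt * ∑ j, ∑ l, (u j l τ ⬝ᵥ M.mulVec (δtz j l τ))) = 0 := by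
    have hX : (∫ τ in (0:ℝ)..1, ∑ j, ∑ l, (u j l τ ⬝ᵥ M.mulVec (δtz j l τ))) = 0 := by
      have hrepr : ∀ τ : ℝ, (∑ j, ∑ l, (u j l τ ⬝ᵥ M.mulVec (δtz j l τ)))
          = ∑ j, ∑ l, ∑ i, lag c i τ * (g j l i ⬝ᵥ M.mulVec (δtz j l τ)) := fun τ =>
        Finset.sum_congr rfl fun j _ => Finset.sum_congr rfl fun l _ => huexp j l τ
      simp only [hrepr]
      rw [intervalIntegral.integral_finset_sum (fun j _ => by
        apply ContinuousOn.intervalIntegrable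
        rw [I01]
        exact continuousOn_finset_sum _ fun l _ =>
          continuousOn_finset_sum _ fun i _ => hcont3 j l i)]
      refine Finset.sum_eq_zero fun j _ => ?_
      rw [intervalIntegral.integral_finset_sum (fun l _ => by
        apply ContinuousOn.intervalIntegrable
        rw [I01]
        exact continuousOn_finset_sum _ fun i _ => hcont3 j l i)]
      refine Finset.sum_eq_zero fun l _ => ?_
      rw [intervalIntegral.integral_finset_sum (fun i _ => hint3 j l i)]
      refine Finset.sum_eq_zero fun i _ => ?_
      rw [hint1 j l i]
      have hgv : g j l i = (1 / bw c i) • (∫ σ in (0:ℝ)..1, lag c i σ • δtz j l σ) := by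
        simp only [hgdef, wavg]
      rw [hgv, smul_dotProduct, smul_eq_mul,
        skew_dot_self hM (∫ σ in (0:ℝ)..1, lag c i σ • δtz j l σ), mul_zero]
    rw [intervalIntegral.integral_const_mul, hX, mul_zero]
  have h10 : E 1 = E 0 := by
    have h := hftc
    rw [hFzero] at h
    linarith
  rw [← hE1', ← hE0', h10]
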